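/- Let k be a commutative field, let 𝒜 be a finite-dimensional central simple k-algebra, and let K/k be an extension of commutative fields. Then the K-algebra Ω = 𝒜 ⊗_k K is a central simple K-algebra (its center is exactly K and it is a simple ring), and the dimension of Ω as a K-vector space equals the dimension of 𝒜 as a k-vector space. -/

import Mathlib

open TensorProduct

attribute [local instance] Algebra.TensorProduct.rightAlgebra

namespace BaseChangeAux

variable {k : Type*} [Field k] {𝒜 : Type*} [Ring 𝒜] [Algebra k 𝒜]
  {K : Type*} [Field K] [Algebra k K] {κ : Type*} [DecidableEq κ]

/-- Coordinates of `𝒜 ⊗[k] K` with respect to a `k`-basis of `K`. -/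
noncomputable def eqv (b : Module.Basis κ k K) : 𝒜 ⊗[k] K ≃ₗ[k] (κ →₀ 𝒜) :=
  (TensorProduct.congr (LinearEquiv.refl k 𝒜) b.repr).trans
    (TensorProduct.finsuppScalarRight k k 𝒜 κ)

variable (b : Module.Basis κ k K)

lemma eqv_tmul (a : 𝒜) (c : K) (i : κ) :
    eqv b (a ⊗ₜ[k] c) i = b.repr c i • a := by
  simp [eqv]

lemma eqv_symm_single (i : κ) (a : 𝒜) :
    (eqv b).symm (Finsupp.single i a) = a ⊗ₜ[k] b i := by
  rw [LinearEquiv.symm_apply_eq]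
  ext j
  classical
  rw [eqv_tmul, Module.Basis.repr_self, Finsupp.single_apply, Finsupp.single_apply]
  split <;> simp

lemma eqv_sum (x : 𝒜 ⊗[k] K) :
    x = (eqv b x).sum fun i a => a ⊗ₜ[k] b i := by
  conv_lhs => rw [← (eqv b).symm_apply_apply x, ← Finsupp.sum_single (eqv b x)]
  rw [map_finsuppSum]
  simp [eqv_symm_single]

lemma eqv_mul_left (a : 𝒜) (x : 𝒜 ⊗[k] K) (i : κ) :
    eqv b ((a ⊗ₜ[k] (1 : K)) * x) i = a * eqv b x i := by
  induction x with
  | zero => simp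
  | tmul m c => simp [Algebra.TensorProduct.tmul_mul_tmul, eqv_tmul, mul_smul_comm]
  | add u v hu hv => simp [mul_add, map_add, hu, hv]

lemma eqv_mul_right (a : 𝒜) (x : 𝒜 ⊗[k] K) (i : κ) :
    eqv b (x * (a ⊗ₜ[k] (1 : K))) i = eqv b x i * a := by
  induction x with
  | zero => simp
  | tmul m c => simp [Algebra.TensorProduct.tmul_mul_tmul, eqv_tmul, smul_mul_assoc]
  | add u v hu hv => simp [add_mul, map_add, hu, hv]

lemma algebraMap_eq (c : K) :
    algebraMap K (𝒜 ⊗[k] K) c = (1 : 𝒜) ⊗ₜ[k] c := rfl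

/-- If all coordinates of `x` are central in `𝒜` and `𝒜` is central over `k`,
then `x` is in the image of `K`. -/
lemma mem_range_of_coords_central [Algebra.IsCentral k 𝒜] (x : 𝒜 ⊗[k] K)
    (h : ∀ i, eqv b x i ∈ Subalgebra.center k 𝒜) :
    x ∈ Set.range (algebraMap K (𝒜 ⊗[k] K)) := by
  have hsub : ∀ i, eqv b x i ∈ (⊥ : Subalgebra k 𝒜) :=
    fun i => Algebra.IsCentral.out (h i)
  have : x ∈ (Algebra.TensorProduct.includeRight : K →ₐ[k] 𝒜 ⊗[k] K).range := by
    rw [eqv_sum b x]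
    refine Subalgebra.sum_mem _ fun i _ => ?_
    obtain ⟨lam, hlam⟩ := Algebra.mem_bot.1 (hsub i)
    refine ⟨lam • b i, ?_⟩
    show (1 : 𝒜) ⊗ₜ[k] (lam • b i) = _
    rw [← hlam]
    rw [tmul_smul, smul_tmul', Algebra.algebraMap_eq_smul_one]
  obtain ⟨c, hc⟩ := this
  exact ⟨c, hc⟩

variable (k 𝒜 K)

lemma nontrivial_tensor [Nontrivial 𝒜] : Nontrivial (𝒜 ⊗[k] K) := by
  classical
  let b := Module.Basis.ofVectorSpace k K
  have : Nonempty (Module.Basis.ofVectorSpaceIndex k K) := b.index_nonempty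
  exact Equiv.nontrivial (eqv (𝒜 := 𝒜) b).toEquiv

lemma isCentral [Algebra.IsCentral k 𝒜] : Algebra.IsCentral K (𝒜 ⊗[k] K) := by
  classical
  let b := Module.Basis.ofVectorSpace k K
  refine ⟨fun z hz => ?_⟩
  rw [Algebra.mem_bot]
  apply mem_range_of_coords_central b
  intro i
  rw [Subalgebra.mem_center_iff]
  intro a
  have hz' : (a ⊗ₜ[k] (1 : K)) * z = z * (a ⊗ₜ[k] (1 : K)) :=
    Subalgebra.mem_center_iff.1 hz (a ⊗ₜ[k] (1 : K))
  calc a * eqv b z i = eqv b ((a ⊗ₜ[k] (1 : K)) * z) i := (eqv_mul_left b a z i).symm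
    _ = eqv b (z * (a ⊗ₜ[k] (1 : K))) i := by rw [hz']
    _ = eqv b z i * a := eqv_mul_right b a z i

lemma isSimpleRing [Algebra.IsCentral k 𝒜] [IsSimpleRing 𝒜] :
    IsSimpleRing (𝒜 ⊗[k] K) := by
  classical
  let b := Module.Basis.ofVectorSpace k K
  have hnt : Nontrivial (𝒜 ⊗[k] K) := nontrivial_tensor k 𝒜 K
  refine ⟨⟨fun I => ?_⟩⟩
  rw [or_iff_not_imp_left]
  intro hI
  have hex : ∃ x, x ∈ I ∧ x ≠ 0 := by
    by_contra h
    push_neg at h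
    exact hI (eq_bot_iff.2 fun x hx => (TwoSidedIdeal.mem_bot _).2 (h x hx))
  set S : Set ℕ := {n | ∃ x, x ∈ I ∧ x ≠ 0 ∧ ((eqv b) x).support.card = n} with hS_def
  have hSne : S.Nonempty := by
    obtain ⟨x, hxI, hx0⟩ := hex
    exact ⟨_, x, hxI, hx0, rfl⟩
  obtain ⟨x, hxI, hx0, hcard⟩ := Nat.sInf_mem hSne
  set n := sInf S with hn_def
  set s := ((eqv b) x).support with hs_def
  have hs : s.Nonempty := by
    rw [Finset.nonempty_iff_ne_empty]
    intro h
    apply hx0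
    have h0 : eqv b x = 0 := Finsupp.support_eq_empty.1 h
    exact (map_eq_zero_iff _ (eqv b).injective).1 h0
  obtain ⟨i₀, hi₀⟩ := hs
  have ha₀ : eqv b x i₀ ≠ 0 := Finsupp.mem_support_iff.1 hi₀
  set T : AddSubgroup 𝒜 :=
    { carrier := {r | ∃ y, y ∈ I ∧ eqv b y i₀ = r ∧ (eqv b y).support ⊆ s}
      zero_mem' := ⟨0, I.zero_mem, by simp, by simp⟩
      add_mem' := by
        rintro r₁ r₂ ⟨y₁, h₁, e₁, s₁⟩ ⟨y₂, h₂, e₂, s₂⟩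
        refine ⟨y₁ + y₂, add_mem h₁ h₂, by rw [map_add, Finsupp.add_apply, e₁, e₂], ?_⟩
        rw [map_add]
        exact (Finsupp.support_add).trans (Finset.union_subset s₁ s₂)
      neg_mem' := by
        rintro r ⟨y, h, e, hs⟩
        refine ⟨-y, neg_mem h, by rw [map_neg, Finsupp.neg_apply, e], ?_⟩
        rw [map_neg, Finsupp.support_neg]
        exact hs } with hT_def
  have hT1 : (1 : 𝒜) ∈ T := by
    have h1span : (1 : 𝒜) ∈ TwoSidedIdeal.span {eqv b x i₀} :=
      IsSimpleRing.one_mem_of_ne_zero_mem _ ha₀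
        (TwoSidedIdeal.subset_span (Set.mem_singleton _))
    rw [TwoSidedIdeal.mem_span_iff_mem_addSubgroup_closure] at h1span
    refine (AddSubgroup.closure_le T).2 ?_ h1span
    rintro r ⟨pr, ⟨p, -, a', ha', rfl⟩, q, -, rfl⟩
    rw [Set.mem_singleton_iff] at ha'
    subst ha'
    refine ⟨(p ⊗ₜ[k] (1 : K)) * x * (q ⊗ₜ[k] (1 : K)), ?_, ?_, ?_⟩
    · exact I.mul_mem_right _ _ (I.mul_mem_left _ _ hxI)
    · rw [eqv_mul_right, eqv_mul_left]
    · intro j hj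
      by_contra hjs
      have hxj : eqv b x j = 0 := Finsupp.notMem_support_iff.1 hjs
      have : eqv b ((p ⊗ₜ[k] (1 : K)) * x * (q ⊗ₜ[k] (1 : K))) j = 0 := by
        rw [eqv_mul_right, eqv_mul_left, hxj, mul_zero, zero_mul]
      exact (Finsupp.mem_support_iff.1 hj) this
  obtain ⟨y, hyI, hy1, hysupp⟩ := hT1
  have hnpos : 0 < n := by
    rw [← hcard]
    exact Finset.card_pos.2 ⟨i₀, hi₀⟩
  have hcomm : ∀ a : 𝒜,
      (a ⊗ₜ[k] (1 : K)) * y - y * (a ⊗ₜ[k] (1 : K)) = 0 := by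
    intro a
    by_contra hw
    set w := (a ⊗ₜ[k] (1 : K)) * y - y * (a ⊗ₜ[k] (1 : K)) with hw_def
    have hwI : w ∈ I := I.sub_mem (I.mul_mem_left _ _ hyI) (I.mul_mem_right _ _ hyI)
    have hwj : ∀ j, eqv b w j = a * eqv b y j - eqv b y j * a := by
      intro j
      rw [hw_def, map_sub, Finsupp.sub_apply, eqv_mul_left, eqv_mul_right]
    have hwsupp : (eqv b w).support ⊆ s.erase i₀ := by
      intro j hj
      have hj' : eqv b w j ≠ 0 := Finsupp.mem_support_iff.1 hj
      rw [Finset.mem_erase]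
      constructor
      · rintro rfl
        apply hj'
        rw [hwj, hy1, mul_one, one_mul, sub_self]
      · by_contra hjs
        apply hj'
        have hyj : eqv b y j = 0 := Finsupp.notMem_support_iff.1 (fun h => hjs (hysupp h))
        rw [hwj, hyj, mul_zero, zero_mul, sub_self]
    have hle : n ≤ (eqv b w).support.card := Nat.sInf_le ⟨w, hwI, hw, rfl⟩
    have hlt : (eqv b w).support.card < n := by
      calc (eqv b w).support.card ≤ (s.erase i₀).card := Finset.card_le_card hwsupp
        _ < s.card := Finset.card_erase_lt_of_mem hi₀
        _ = n := hcard
    omega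
  have hc : ∀ i, eqv b y i ∈ Subalgebra.center k 𝒜 := by
    intro i
    rw [Subalgebra.mem_center_iff]
    intro a
    have h0 : eqv b ((a ⊗ₜ[k] (1 : K)) * y - y * (a ⊗ₜ[k] (1 : K))) i = 0 := by
      rw [hcomm a, map_zero, Finsupp.coe_zero, Pi.zero_apply]
    rw [map_sub, Finsupp.sub_apply, eqv_mul_left, eqv_mul_right, sub_eq_zero] at h0
    exact h0
  obtain ⟨c, hc'⟩ := mem_range_of_coords_central b y hc
  have hc0 : c ≠ 0 := by
    rintro rfl
    rw [map_zero] at hc'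
    rw [← hc', map_zero, Finsupp.coe_zero, Pi.zero_apply] at hy1
    exact one_ne_zero hy1.symm
  apply TwoSidedIdeal.eq_top
  have hmem : algebraMap K (𝒜 ⊗[k] K) c⁻¹ * y ∈ I := I.mul_mem_left _ _ hyI
  rwa [← hc', ← map_mul, inv_mul_cancel₀ hc0, map_one] at hmem

lemma finrank_eq : Module.finrank K (𝒜 ⊗[k] K) = Module.finrank k 𝒜 := by
  let e : (𝒜 ⊗[k] K) ≃ₗ[K] K ⊗[k] 𝒜 :=
    AddEquiv.toLinearEquiv (Algebra.TensorProduct.comm k 𝒜 K).toAddEquiv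
      (fun c x => by
        show (Algebra.TensorProduct.comm k 𝒜 K) (c • x) = c • _
        rw [Algebra.smul_def, map_mul, Algebra.smul_def]
        congr 1)
  rw [e.finrank_eq, Module.finrank_baseChange]

end BaseChangeAux

/-- **Proposition 1.a.** If `𝒜` is a finite-dimensional central simple `k`-algebra and `K/k` is
an extension of commutative fields, then `Ω = 𝒜 ⊗[k] K` (with its `K`-algebra structure coming
from the right tensor factor) is a central simple `K`-algebra of the same dimension:
its center is exactly `K`, it is a simple ring, and `dim_K Ω = dim_k 𝒜`. -/
theorem baseChange_isCentralSimple_and_finrank_eq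
    (k : Type*) [Field k]
    (𝒜 : Type*) [Ring 𝒜] [Algebra k 𝒜] [FiniteDimensional k 𝒜]
    [Algebra.IsCentral k 𝒜] [IsSimpleRing 𝒜]
    (K : Type*) [Field K] [Algebra k K] :
    Algebra.IsCentral K (𝒜 ⊗[k] K) ∧ IsSimpleRing (𝒜 ⊗[k] K) ∧
      Module.finrank K (𝒜 ⊗[k] K) = Module.finrank k 𝒜 := by
  exact ⟨BaseChangeAux.isCentral k 𝒜 K, BaseChangeAux.isSimpleRing k 𝒜 K,
    BaseChangeAux.finrank_eq k 𝒜 K⟩
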